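/- Let D ≥ 2 and b_1, ..., b_D ≥ 2 be integers, and set B = b_1 b_2 ··· b_D. Let r_1 ≥ b_1 + 1 be an integer and let m_2, ..., m_D be integers with m_j > B for every 2 ≤ j ≤ D. Set q = 2^{B/b_1}, n_1 = (q^{r_1 - b_1 + 1} - 1)/(q - 1), and n_j = ⌊(2^{m_j} - 1)/(B/b_j)⌋ for 2 ≤ j ≤ D. Then log_2(n_1 · n_2 ··· n_D) ≥ (B/b_1)·r_1 - B + Σ_{j=2}^{D} m_j - log_2(B^{D-2}·b_1) - 1. -/

import Mathlib

private lemma sq_le_two_pow' (n : ℕ) (hn : 4 ≤ n) : n * n ≤ 2 ^ n := by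
  induction n, hn using Nat.le_induction with
  | base => norm_num
  | succ k hk ih =>
    have h2 : 2 * k + 1 ≤ k * k := by nlinarith
    calc (k+1) * (k+1) = k*k + (2*k+1) := by ring
      _ ≤ 2^k + 2^k := by omega
      _ = 2^(k+1) := by ring


/-- The redundancy computation for the D-dimensional box-error construction:
with `B = b₁⋯b_D`, `q = 2^(B/b₁)`, `n₁ = (q^(r₁-b₁+1)-1)/(q-1)` and
`n_j = ⌊(2^(m_j)-1)/(B/b_j)⌋` for `2 ≤ j ≤ D` (here `0`-indexed: `b 0 = b₁`, etc.),
one has `log₂(n₁⋯n_D) ≥ (B/b₁)·r₁ - B + Σ_{j=2}^{D} m_j - log₂(B^(D-2)·b₁) - 1`. -/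
theorem stmt17 (D : ℕ) (hD : 2 ≤ D) (b : ℕ → ℕ) (hb : ∀ j < D, 2 ≤ b j)
    (B : ℕ) (hB : B = ∏ j ∈ Finset.range D, b j)
    (r₁ : ℕ) (hr₁ : b 0 + 1 ≤ r₁)
    (m : ℕ → ℕ) (hm : ∀ j, 1 ≤ j → j < D → B < m j)
    (q : ℕ) (hq : q = 2 ^ (B / b 0))
    (n : ℕ → ℕ)
    (hn0 : n 0 = (q ^ (r₁ - b 0 + 1) - 1) / (q - 1))
    (hnj : ∀ j, 1 ≤ j → j < D → n j = (2 ^ m j - 1) / (B / b j)) :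
    ((B / b 0 : ℕ) : ℝ) * (r₁ : ℝ) - (B : ℝ) + (∑ j ∈ Finset.Ico 1 D, (m j : ℝ))
        - Real.logb 2 ((B : ℝ) ^ (D - 2) * ((b 0 : ℕ) : ℝ)) - 1
      ≤ Real.logb 2 (∏ j ∈ Finset.range D, ((n j : ℕ) : ℝ)) := by
  -- basic positivity facts
  have hbpos : ∀ j < D, 0 < b j := fun j hj => lt_of_lt_of_le (by norm_num) (hb j hj)
  have hb0 : 2 ≤ b 0 := hb 0 (by omega)
  have hBsplit : B = b 0 * ∏ j ∈ Finset.Ico 1 D, b j := by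
    rw [hB, Finset.range_eq_Ico, Finset.prod_eq_prod_Ico_succ_bot (by omega : 0 < D) b]
  have hrest_pos : 0 < ∏ j ∈ Finset.Ico 1 D, b j :=
    Finset.prod_pos (fun j hj => hbpos j (Finset.mem_Ico.mp hj).2)
  have hBpos : 0 < B := by
    rw [hBsplit]; exact Nat.mul_pos (by omega) hrest_pos
  have hdvd : ∀ j < D, b j ∣ B := fun j hj =>
    hB ▸ Finset.dvd_prod_of_mem b (Finset.mem_range.mpr hj)
  -- B ≥ 2^D
  have h2D : 2 ^ D ≤ B := by
    rw [hB]
    calc 2^D = ∏ _j ∈ Finset.range D, 2 := by rw [Finset.prod_const, Finset.card_range]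
      _ ≤ ∏ j ∈ Finset.range D, b j :=
        Finset.prod_le_prod' (fun j hj => hb j (Finset.mem_range.mp hj))
  have hB4 : 4 ≤ B := le_trans (by calc (4:ℕ) = 2^2 := by norm_num
    _ ≤ 2^D := Nat.pow_le_pow_right (by norm_num) hD) h2D
  have hD2 : 2 * D ≤ 2 ^ D := by
    have h : D - 1 < 2 ^ (D-1) := Nat.lt_two_pow_self
    have h2 : 2^(D-1) * 2 = 2^D := by rw [← pow_succ]; congr 1; omega
    omega
  -- the key counting inequality
  have hkey : (D - 1) * B * 2 ≤ 2 ^ (B + 2) := by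
    calc (D-1) * B * 2 = (2*(D-1)) * B := by ring
      _ ≤ B * B := Nat.mul_le_mul_right B (by omega)
      _ ≤ 2^B := sq_le_two_pow' B hB4
      _ ≤ 2^(B+2) := Nat.pow_le_pow_right (by norm_num) (by omega)
  -- Part A : lower bound on n 0
  set a := B / b 0 with ha
  have ha1 : a * b 0 = B := Nat.div_mul_cancel (hdvd 0 (by omega))
  have hapos : 0 < a := by
    rcases Nat.eq_zero_or_pos a with h | h
    · rw [h, zero_mul] at ha1; omega
    · exact h
  have hq2 : 2 ≤ q := by
    rw [hq]
    calc 2 = 2^1 := by norm_num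
      _ ≤ 2^a := Nat.pow_le_pow_right (by norm_num) hapos
  set s := r₁ - b 0 with hsdef
  have hs1 : 1 ≤ s := by omega
  have hn0' : q ^ s ≤ n 0 := by
    rw [hn0]
    rw [Nat.le_div_iff_mul_le (by omega : 0 < q - 1)]
    have he : q ^ s * (q - 1) = q^(s+1) - q^s := by
      rw [Nat.mul_sub, mul_one, ← pow_succ]
    rw [he]
    have h1 : 1 ≤ q ^ s := Nat.one_le_pow _ _ (by omega)
    have h2 : q ^ s ≤ q ^ (s+1) := Nat.pow_le_pow_right (by omega) (by omega)
    have : r₁ - b 0 + 1 = s + 1 := rfl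
    omega
  have hn0R : (2:ℝ) ^ (a * s) ≤ (n 0 : ℝ) := by
    have : q ^ s = 2 ^ (a * s) := by rw [hq, ← pow_mul]
    exact_mod_cast this ▸ Nat.cast_le.mpr hn0'
  -- Part B : per-factor bounds
  set ε : ℝ := (B : ℝ) / 2 ^ (B + 2) with hε
  have hεpos : 0 < ε := by positivity
  have hDcast : ((D - 1 : ℕ) : ℝ) = (D:ℝ) - 1 := by
    push_cast [Nat.cast_sub (by omega : 1 ≤ D)]; ring
  have hkeyR : ((D:ℝ) - 1) * (B:ℝ) * 2 ≤ (2:ℝ)^(B+2) := by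
    have h : ((D - 1 : ℕ):ℝ) * (B:ℝ) * 2 ≤ (2:ℝ)^(B+2) := by exact_mod_cast hkey
    rw [hDcast] at h; exact h
  have hε2 : ((D:ℝ) - 1) * ε ≤ 1/2 := by
    rw [hε, mul_div_assoc']
    rw [div_le_iff₀ (by positivity)]
    linarith
  have hε1 : ε ≤ 1/2 := by
    have hD1 : (1:ℝ) ≤ (D:ℝ) - 1 := by
      have : (2:ℝ) ≤ D := by exact_mod_cast hD
      linarith
    nlinarith
  have hfac : ∀ j ∈ Finset.Ico 1 D,
      (2:ℝ)^(m j) * (1 - ε) / ((B / b j : ℕ) : ℝ) ≤ (n j : ℝ) := by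
    intro j hj
    obtain ⟨hj1, hjD⟩ := Finset.mem_Ico.mp hj
    have hkb : (B / b j) * b j = B := Nat.div_mul_cancel (hdvd j hjD)
    have hbj : 2 ≤ b j := hb j hjD
    have hkpos : 0 < B / b j := by
      rcases Nat.eq_zero_or_pos (B / b j) with h | h
      · rw [h, zero_mul] at hkb; omega
      · exact h
    have hk2 : 2 * (B / b j) ≤ B := by
      calc 2 * (B / b j) = (B / b j) * 2 := by ring
        _ ≤ (B / b j) * b j := Nat.mul_le_mul_left _ hbj
        _ = B := hkb
    have hmj : B < m j := hm j hj1 hjD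
    -- nat bound 1 : 2^(m j) ≤ (n j + 1) * (B / b j)
    have hnat1 : 2 ^ m j ≤ (n j + 1) * (B / b j) := by
      have hlt : 2 ^ m j - 1 < ((2 ^ m j - 1) / (B / b j) + 1) * (B / b j) := by
        rw [add_one_mul]
        calc 2 ^ m j - 1 = (2 ^ m j - 1) / (B / b j) * (B / b j) + (2 ^ m j - 1) % (B / b j) :=
          (Nat.div_add_mod' _ _).symm
          _ < (2 ^ m j - 1) / (B / b j) * (B / b j) + (B / b j) :=
            Nat.add_lt_add_left (Nat.mod_lt _ hkpos) _
      rw [hnj j hj1 hjD]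
      have hp1 : 1 ≤ 2 ^ m j := Nat.one_le_two_pow
      omega
    -- nat bound 2 : (B / b j) * 2^(B+2) ≤ 2^(m j) * B
    have hnat2 : (B / b j) * 2 ^ (B + 2) ≤ 2 ^ (m j) * B := by
      calc (B / b j) * 2^(B+2) = (2 * (B / b j)) * 2^(B+1) := by ring
        _ ≤ B * 2^(B+1) := Nat.mul_le_mul_right _ hk2
        _ ≤ B * 2^(m j) := Nat.mul_le_mul_left _ (Nat.pow_le_pow_right (by norm_num) (by omega))
        _ = 2^(m j) * B := by ring
    have hkR : (0:ℝ) < ((B / b j : ℕ) : ℝ) := by exact_mod_cast hkpos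
    rw [div_le_iff₀ hkR]
    have h1 : (2:ℝ)^(m j) ≤ ((n j : ℝ) + 1) * ((B / b j : ℕ) : ℝ) := by
      exact_mod_cast hnat1
    have h2 : ((B / b j : ℕ) : ℝ) ≤ (2:ℝ)^(m j) * ε := by
      rw [hε, mul_div_assoc']
      rw [le_div_iff₀ (by positivity)]
      exact_mod_cast hnat2
    nlinarith
  -- product over Ico 1 D of the denominators
  have hprodk : (∏ j ∈ Finset.Ico 1 D, (B / b j)) = B^(D-2) * b 0 := by
    have h1 : (∏ j ∈ Finset.Ico 1 D, (B / b j)) * (∏ j ∈ Finset.Ico 1 D, b j) = B^(D-1) := by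
      rw [← Finset.prod_mul_distrib]
      calc ∏ j ∈ Finset.Ico 1 D, (B / b j * b j) = ∏ _j ∈ Finset.Ico 1 D, B :=
          Finset.prod_congr rfl (fun j hj => Nat.div_mul_cancel (hdvd j (Finset.mem_Ico.mp hj).2))
        _ = B^(D-1) := by rw [Finset.prod_const, Nat.card_Ico]
    have h2 : (B^(D-2) * b 0) * (∏ j ∈ Finset.Ico 1 D, b j) = B^(D-1) := by
      calc (B^(D-2) * b 0) * (∏ j ∈ Finset.Ico 1 D, b j)
          = B^(D-2) * (b 0 * ∏ j ∈ Finset.Ico 1 D, b j) := by ring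
        _ = B^(D-2) * B := by rw [← hBsplit]
        _ = B^(D-1) := by rw [← pow_succ]; congr 1; omega
    exact Nat.eq_of_mul_eq_mul_right hrest_pos (h1.trans h2.symm)
  -- product lower bound for j ≥ 1
  have hprodB : (2:ℝ)^(∑ j ∈ Finset.Ico 1 D, m j) * (1/2) / ((B:ℝ)^(D-2) * (b 0 : ℝ))
      ≤ ∏ j ∈ Finset.Ico 1 D, (n j : ℝ) := by
    have hstep1 : ∏ j ∈ Finset.Ico 1 D, ((2:ℝ)^(m j) * (1 - ε) / ((B / b j : ℕ) : ℝ))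
        ≤ ∏ j ∈ Finset.Ico 1 D, (n j : ℝ) := by
      apply Finset.prod_le_prod
      · intro j hj
        have hkpos : (0:ℝ) < ((B / b j : ℕ) : ℝ) := by
          have hkb : (B / b j) * b j = B := Nat.div_mul_cancel (hdvd j (Finset.mem_Ico.mp hj).2)
          have : 0 < B / b j := by
            rcases Nat.eq_zero_or_pos (B / b j) with h | h
            · rw [h, zero_mul] at hkb; omega
            · exact h
          exact_mod_cast this
        have : (0:ℝ) ≤ 1 - ε := by linarith
        positivity
      · exact hfac
    refine le_trans ?_ hstep1
    have heq : ∏ j ∈ Finset.Ico 1 D, ((2:ℝ)^(m j) * (1 - ε) / ((B / b j : ℕ) : ℝ))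
        = (2:ℝ)^(∑ j ∈ Finset.Ico 1 D, m j) * (1 - ε)^(D-1) / ((B:ℝ)^(D-2) * (b 0 : ℝ)) := by
      rw [Finset.prod_div_distrib, Finset.prod_mul_distrib, Finset.prod_const,
        Finset.prod_pow_eq_pow_sum, Nat.card_Ico]
      rw [← Nat.cast_prod, hprodk]
      push_cast
      ring
    rw [heq]
    have hber : (1:ℝ)/2 ≤ (1-ε)^(D-1) := by
      have h := one_add_mul_le_pow (show (-2:ℝ) ≤ -ε by linarith) (D-1)
      calc (1:ℝ)/2 ≤ 1 + ((D:ℝ)-1) * -ε := by linarith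
        _ = 1 + ((D-1:ℕ):ℝ) * -ε := by rw [hDcast]
        _ ≤ (1 + -ε)^(D-1) := h
        _ = (1-ε)^(D-1) := by ring_nf
    have hden : (0:ℝ) < (B:ℝ)^(D-2) * ((b 0 : ℕ):ℝ) := by
      have : (0:ℝ) < (B:ℝ) := by exact_mod_cast hBpos
      have : (0:ℝ) < ((b 0 : ℕ):ℝ) := by exact_mod_cast hbpos 0 (by omega)
      positivity
    gcongr
  -- combine everything
  set Sm := ∑ j ∈ Finset.Ico 1 D, m j with hSm
  set d : ℝ := (B:ℝ)^(D-2) * ((b 0 : ℕ):ℝ) with hd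
  have hdpos : (0:ℝ) < d := by
    have h1 : (0:ℝ) < (B:ℝ) := by exact_mod_cast hBpos
    have h2 : (0:ℝ) < ((b 0 : ℕ):ℝ) := by exact_mod_cast hbpos 0 (by omega)
    rw [hd]; positivity
  have hrange : ∏ j ∈ Finset.range D, ((n j:ℕ):ℝ) = (n 0:ℝ) * ∏ j ∈ Finset.Ico 1 D, ((n j:ℕ):ℝ) := by
    rw [Finset.range_eq_Ico, Finset.prod_eq_prod_Ico_succ_bot (by omega : 0 < D)]
  set L : ℝ := (2:ℝ)^(a*s) * ((2:ℝ)^Sm * (1/2) / d) with hL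
  have hLpos : 0 < L := by rw [hL]; positivity
  have hle : L ≤ ∏ j ∈ Finset.range D, ((n j:ℕ):ℝ) := by
    rw [hrange, hL]
    exact mul_le_mul hn0R hprodB (by positivity) (le_trans (by positivity) hn0R)
  have hPpos : 0 < ∏ j ∈ Finset.range D, ((n j:ℕ):ℝ) := lt_of_lt_of_le hLpos hle
  have hgoal : Real.logb 2 L = ((a*s : ℕ):ℝ) + ((Sm:ℕ):ℝ) - 1 - Real.logb 2 d := by
    rw [hL, mul_div_assoc']
    rw [Real.logb_div (by positivity) (by positivity)]
    rw [Real.logb_mul (by positivity) (by norm_num)]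
    rw [Real.logb_mul (by positivity) (by positivity)]
    rw [Real.logb_pow, Real.logb_pow, Real.logb_self_eq_one (by norm_num)]
    have : Real.logb 2 (1/2) = -1 := by
      rw [one_div, Real.logb_inv, Real.logb_self_eq_one (by norm_num)]
    rw [this]; push_cast; ring
  have hlhs : ((B / b 0 : ℕ) : ℝ) * (r₁ : ℝ) - (B : ℝ) + (∑ j ∈ Finset.Ico 1 D, (m j : ℝ))
      - Real.logb 2 d - 1 = Real.logb 2 L := by
    rw [hgoal]
    have hab : ((a:ℕ):ℝ) * ((b 0:ℕ):ℝ) = (B:ℝ) := by exact_mod_cast ha1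
    have h1 : ((a*s : ℕ):ℝ) = ((a:ℕ):ℝ)*(r₁:ℝ) - (B:ℝ) := by
      rw [hsdef]; push_cast [Nat.cast_sub (show b 0 ≤ r₁ by omega)]
      linear_combination -hab
    have h2 : ((Sm:ℕ):ℝ) = ∑ j ∈ Finset.Ico 1 D, ((m j : ℕ):ℝ) := by
      rw [hSm]; push_cast; ring
    rw [h1, h2]
    ring
  rw [hlhs]
  exact (Real.logb_le_logb (by norm_num) hLpos hPpos).mpr hle
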